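/- Directional effect of a new rating in SCoRa: let D be a SCoRa dataset and let D' be obtained from D by adding one rating (a, t). Then Sign((θ_a*(D') − θ_0*(D')) − (θ_a*(D) − θ_0*(D))) = Sign(t − Φ_g'(θ_a*(D) − θ_0*(D))), where Sign is the sign function with Sign(0) = 0. -/

import Mathlib

open MeasureTheory RealInnerProductSpace

noncomputable section

/-- The cumulant generating function `Φ_μ(θ) = log ∫ exp(θ r) dμ(r)` of a measure `μ` on `ℝ`. -/
def cgfm (μ : Measure ℝ) (θ : ℝ) : ℝ := Real.log (∫ r, Real.exp (θ * r) ∂μ)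

/-- `μ` has finite exponential moments: `∫ exp(θ r) dμ(r) < ∞` for every `θ`. -/
def HasExpMoments (μ : Measure ℝ) : Prop :=
  ∀ θ : ℝ, Integrable (fun r => Real.exp (θ * r)) μ

/-- The SCoRa negative log-posterior `L(β, θ0 | D)` for a dataset consisting of a multiset `C`
of comparisons `(b, c, r)` and a multiset `Rt` of ratings `(a, t)`, with embedding columns
`x a ∈ ℝ^D`, comparison root law `f`, rating root law `g`, and prior variances `sb2 = σ_β²`,
`s02 = σ_0²`. -/
def scoraLoss {Dd A : ℕ} (x : Fin A → EuclideanSpace ℝ (Fin Dd))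
    (f g : Measure ℝ) (sb2 s02 : ℝ)
    (C : Multiset (Fin A × Fin A × ℝ)) (Rt : Multiset (Fin A × ℝ))
    (β : EuclideanSpace ℝ (Fin Dd)) (θ0 : ℝ) : ℝ :=
  ‖β‖ ^ 2 / (2 * sb2) + θ0 ^ 2 / (2 * s02)
    + (C.map (fun q =>
        cgfm f ⟪x q.1 - x q.2.1, β⟫ - q.2.2 * ⟪x q.1 - x q.2.1, β⟫)).sum
    + (Rt.map (fun q =>
        cgfm g (⟪x q.1, β⟫ - θ0) - q.2 * (⟪x q.1, β⟫ - θ0))).sum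

namespace ScoraAux

variable {μ : Measure ℝ}

lemma integrable_abs_mul_exp (hμ : HasExpMoments μ) (c θ : ℝ) (hθ : |θ| ≤ c) :
    Integrable (fun r => |r| * Real.exp (θ * r)) μ := by
  have hint : Integrable (fun r => Real.exp ((c+1) * r) + Real.exp (-(c+1) * r)) μ :=
    (hμ (c+1)).add (hμ (-(c+1)))
  refine hint.mono' ?_ ?_
  · exact (continuous_abs.mul (Real.continuous_exp.comp
      (continuous_const.mul continuous_id))).aestronglyMeasurable
  · filter_upwards with r
    have h0 : 0 ≤ |r| * Real.exp (θ * r) := by positivity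
    rw [Real.norm_of_nonneg h0]
    have h1 : θ * r ≤ c * |r| := by
      calc θ * r ≤ |θ * r| := le_abs_self _
      _ = |θ| * |r| := abs_mul _ _
      _ ≤ c * |r| := by apply mul_le_mul_of_nonneg_right hθ (abs_nonneg r)
    have h2 : |r| ≤ Real.exp |r| := (Real.add_one_le_exp |r|).trans' (by linarith [abs_nonneg r])
    have h3 : |r| * Real.exp (θ * r) ≤ Real.exp ((c+1) * |r|) := by
      calc |r| * Real.exp (θ * r) ≤ Real.exp |r| * Real.exp (c * |r|) :=
        mul_le_mul h2 (Real.exp_le_exp.2 h1) (Real.exp_nonneg _) (Real.exp_nonneg _)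
      _ = Real.exp ((c+1) * |r|) := by rw [← Real.exp_add]; ring_nf
    refine h3.trans ?_
    rcases abs_cases r with ⟨h, _⟩ | ⟨h, _⟩ <;> rw [h]
    · nlinarith [Real.exp_pos (-(c+1) * r), le_refl (Real.exp ((c+1)*r))]
    · have : -(c+1) * r = (c+1) * (-r) := by ring
      rw [this]
      nlinarith [Real.exp_pos ((c+1) * r)]

lemma integral_exp_pos' [IsProbabilityMeasure μ] (hμ : HasExpMoments μ) (θ : ℝ) :
    0 < ∫ r, Real.exp (θ * r) ∂μ := by
  haveI : NeZero μ := ⟨IsProbabilityMeasure.ne_zero μ⟩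
  exact integral_exp_pos (hμ θ)

lemma hasDerivAt_cgfm [IsProbabilityMeasure μ] (hμ : HasExpMoments μ) (θ₀ : ℝ) :
    HasDerivAt (cgfm μ)
      ((∫ r, r * Real.exp (θ₀ * r) ∂μ) / (∫ r, Real.exp (θ₀ * r) ∂μ)) θ₀ := by
  set c : ℝ := |θ₀| + 1 with hc
  have key := hasDerivAt_integral_of_dominated_loc_of_deriv_le
    (F := fun θ r => Real.exp (θ * r)) (F' := fun θ r => r * Real.exp (θ * r))
    (x₀ := θ₀) (s := Metric.ball θ₀ 1) (bound := fun r => |r| * Real.exp (c * r) + |r| * Real.exp (-c * r))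
    (μ := μ) (Metric.ball_mem_nhds θ₀ one_pos) ?_ (hμ θ₀) ?_ ?_ ?_ ?_
  · have hM := key.2
    exact (hM.log (integral_exp_pos' hμ θ₀).ne')
  · filter_upwards with θ
    exact (Real.continuous_exp.comp (continuous_const.mul continuous_id)).aestronglyMeasurable
  · exact (continuous_id.mul (Real.continuous_exp.comp
      (continuous_const.mul continuous_id))).aestronglyMeasurable
  · filter_upwards with r
    intro θ hθball
    have hθc : |θ| ≤ c := by
      rw [Metric.mem_ball, Real.dist_eq] at hθball
      rw [hc]
      have := abs_sub_abs_le_abs_sub θ θ₀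
      linarith
    have h1 : θ * r ≤ c * |r| := by
      calc θ * r ≤ |θ * r| := le_abs_self _
      _ = |θ| * |r| := abs_mul _ _
      _ ≤ c * |r| := mul_le_mul_of_nonneg_right hθc (abs_nonneg r)
    have h0 : ‖r * Real.exp (θ * r)‖ = |r| * Real.exp (θ * r) := by
      rw [Real.norm_eq_abs, abs_mul, abs_of_pos (Real.exp_pos _)]
    rw [h0]
    have h2 : |r| * Real.exp (θ * r) ≤ |r| * Real.exp (c * |r|) :=
      mul_le_mul_of_nonneg_left (Real.exp_le_exp.2 h1) (abs_nonneg r)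
    refine h2.trans ?_
    rcases abs_cases r with ⟨h, _⟩ | ⟨h, _⟩ <;> rw [h] <;>
      [skip; rw [show c * -r = -c * r by ring]] <;>
      nlinarith [Real.exp_pos (-c * r), Real.exp_pos (c * r), abs_nonneg r]
  · have hcc : |c| ≤ c := le_of_eq (abs_of_pos (by positivity))
    have hcc' : |(-c : ℝ)| ≤ c := by rw [abs_neg]; exact hcc
    exact (integrable_abs_mul_exp hμ c c hcc).add (integrable_abs_mul_exp hμ c (-c) hcc')
  · filter_upwards with r
    intro θ _
    have : HasDerivAt (fun θ : ℝ => θ * r) r θ := by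
      simpa using (hasDerivAt_id θ).mul_const r
    exact ((Real.hasDerivAt_exp (θ * r)).comp θ this).congr_deriv (mul_comm _ _)

lemma convexOn_cgfm [IsProbabilityMeasure μ] (hμ : HasExpMoments μ) :
    ConvexOn ℝ Set.univ (cgfm μ) := by
  refine ⟨convex_univ, ?_⟩
  intro y _ z _ p q hp hq hpq
  simp only [smul_eq_mul]
  have hmeas : ∀ w : ℝ, AEMeasurable (fun r => ENNReal.ofReal (Real.exp (w * r))) μ := by
    intro w
    exact (ENNReal.continuous_ofReal.comp
      (Real.continuous_exp.comp (continuous_const.mul continuous_id))).aemeasurable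
  have hoi : ∀ w : ℝ, ENNReal.ofReal (∫ r, Real.exp (w * r) ∂μ)
      = ∫⁻ r, ENNReal.ofReal (Real.exp (w * r)) ∂μ := by
    intro w
    exact ofReal_integral_eq_lintegral_ofReal (hμ w)
      (Filter.Eventually.of_forall fun r => (Real.exp_pos _).le)
  have key := ENNReal.lintegral_mul_norm_pow_le (μ := μ)
    (f := fun r => ENNReal.ofReal (Real.exp (y * r)))
    (g := fun r => ENNReal.ofReal (Real.exp (z * r))) (hmeas y) (hmeas z) hp hq hpq
  have hptw : ∀ r : ℝ, ENNReal.ofReal (Real.exp ((p * y + q * z) * r))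
      = ENNReal.ofReal (Real.exp (y * r)) ^ p * ENNReal.ofReal (Real.exp (z * r)) ^ q := by
    intro r
    rw [ENNReal.ofReal_rpow_of_pos (Real.exp_pos _), ENNReal.ofReal_rpow_of_pos (Real.exp_pos _),
      ← ENNReal.ofReal_mul (by positivity), ← Real.exp_mul, ← Real.exp_mul, ← Real.exp_add]
    ring_nf
  have hL : ENNReal.ofReal (∫ r, Real.exp ((p * y + q * z) * r) ∂μ)
      ≤ ENNReal.ofReal ((∫ r, Real.exp (y * r) ∂μ) ^ p * (∫ r, Real.exp (z * r) ∂μ) ^ q) := by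
    rw [hoi]
    calc ∫⁻ r, ENNReal.ofReal (Real.exp ((p * y + q * z) * r)) ∂μ
        = ∫⁻ r, ENNReal.ofReal (Real.exp (y * r)) ^ p
            * ENNReal.ofReal (Real.exp (z * r)) ^ q ∂μ := by
          simp_rw [hptw]
      _ ≤ (∫⁻ r, ENNReal.ofReal (Real.exp (y * r)) ∂μ) ^ p
            * (∫⁻ r, ENNReal.ofReal (Real.exp (z * r)) ∂μ) ^ q := key
      _ = ENNReal.ofReal ((∫ r, Real.exp (y * r) ∂μ) ^ p * (∫ r, Real.exp (z * r) ∂μ) ^ q) := by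
          rw [← hoi, ← hoi, ENNReal.ofReal_rpow_of_pos (integral_exp_pos' hμ y),
            ENNReal.ofReal_rpow_of_pos (integral_exp_pos' hμ z),
            ← ENNReal.ofReal_mul (by positivity)]
  have hR : (∫ r, Real.exp ((p * y + q * z) * r) ∂μ)
      ≤ (∫ r, Real.exp (y * r) ∂μ) ^ p * (∫ r, Real.exp (z * r) ∂μ) ^ q :=
    (ENNReal.ofReal_le_ofReal_iff (by positivity)).mp hL
  unfold cgfm
  calc Real.log (∫ r, Real.exp ((p * y + q * z) * r) ∂μ)
      ≤ Real.log ((∫ r, Real.exp (y * r) ∂μ) ^ p * (∫ r, Real.exp (z * r) ∂μ) ^ q) :=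
        Real.log_le_log (integral_exp_pos' hμ _) hR
    _ = p * Real.log (∫ r, Real.exp (y * r) ∂μ) + q * Real.log (∫ r, Real.exp (z * r) ∂μ) := by
        rw [Real.log_mul (Real.rpow_pos_of_pos (integral_exp_pos' hμ y) p).ne'
            (Real.rpow_pos_of_pos (integral_exp_pos' hμ z) q).ne',
          Real.log_rpow (integral_exp_pos' hμ y), Real.log_rpow (integral_exp_pos' hμ z)]

lemma cgfm_midpoint [IsProbabilityMeasure μ] (hμ : HasExpMoments μ) (v1 v2 : ℝ) :
    cgfm μ ((v1 + v2) / 2) ≤ (cgfm μ v1 + cgfm μ v2) / 2 := by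
  have h := (convexOn_cgfm hμ).2 (Set.mem_univ v1) (Set.mem_univ v2)
    (by norm_num : (0:ℝ) ≤ 1/2) (by norm_num : (0:ℝ) ≤ 1/2) (by norm_num)
  simp only [smul_eq_mul] at h
  have h2 : (v1 + v2) / 2 = 1/2 * v1 + 1/2 * v2 := by ring
  rw [h2]
  linarith

lemma tangent_le {F : ℝ → ℝ} (hc : ConvexOn ℝ Set.univ F) {d u : ℝ}
    (hd : HasDerivAt F d u) (y : ℝ) : F u + d * (y - u) ≤ F y := by
  rcases lt_trichotomy u y with h | rfl | h
  · have h1 := hc.le_slope_of_hasDerivAt (Set.mem_univ u) (Set.mem_univ y) h hd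
    rw [slope_def_field] at h1
    have hyu : 0 < y - u := by linarith
    rw [le_div_iff₀ hyu] at h1
    linarith
  · simp
  · have h1 := hc.slope_le_of_hasDerivAt (Set.mem_univ y) (Set.mem_univ u) h hd
    rw [slope_def_field] at h1
    have hyu : 0 < u - y := by linarith
    rw [div_le_iff₀ hyu] at h1
    nlinarith

lemma sum_map_le_half {ι : Type*} (m : Multiset ι) (F G H : ι → ℝ)
    (h : ∀ i ∈ m, F i ≤ (G i + H i) / 2) :
    (m.map F).sum ≤ ((m.map G).sum + (m.map H).sum) / 2 := by
  induction m using Multiset.induction_on with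
  | empty => simp
  | cons a s ih =>
    simp only [Multiset.map_cons, Multiset.sum_cons]
    have h1 := h a (Multiset.mem_cons_self a s)
    have h2 := ih (fun i hi => h i (Multiset.mem_cons_of_mem hi))
    linarith

lemma hasDerivAt_sum_map {ι : Type*} (m : Multiset ι) (F : ι → ℝ → ℝ) (F' : ι → ℝ) (s : ℝ)
    (h : ∀ i ∈ m, HasDerivAt (F i) (F' i) s) :
    HasDerivAt (fun y => (m.map (fun i => F i y)).sum) ((m.map F').sum) s := by
  induction m using Multiset.induction_on with
  | empty => simpa using hasDerivAt_const s (0:ℝ)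
  | cons a u ih =>
    simp only [Multiset.map_cons, Multiset.sum_cons]
    exact (h a (Multiset.mem_cons_self a u)).add
      (ih fun i hi => h i (Multiset.mem_cons_of_mem hi))

lemma scoraLoss_cons {Dd A : ℕ} (x : Fin A → EuclideanSpace ℝ (Fin Dd))
    (f g : Measure ℝ) (sb2 s02 : ℝ)
    (C : Multiset (Fin A × Fin A × ℝ)) (Rt : Multiset (Fin A × ℝ))
    (a : Fin A) (t : ℝ) (β : EuclideanSpace ℝ (Fin Dd)) (θ0 : ℝ) :
    scoraLoss x f g sb2 s02 C ((a, t) ::ₘ Rt) β θ0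
      = scoraLoss x f g sb2 s02 C Rt β θ0
        + (cgfm g (⟪x a, β⟫ - θ0) - t * (⟪x a, β⟫ - θ0)) := by
  simp only [scoraLoss, Multiset.map_cons, Multiset.sum_cons]
  ring

lemma scoraLoss_midpoint {Dd A : ℕ} (x : Fin A → EuclideanSpace ℝ (Fin Dd))
    (f g : Measure ℝ) [IsProbabilityMeasure f] [IsProbabilityMeasure g]
    (hf : HasExpMoments f) (hg : HasExpMoments g)
    {sb2 s02 : ℝ} (hsb : 0 < sb2) (hs0 : 0 < s02)
    (C : Multiset (Fin A × Fin A × ℝ)) (Rt : Multiset (Fin A × ℝ))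
    (β β' : EuclideanSpace ℝ (Fin Dd)) (θ0 θ0' : ℝ) :
    scoraLoss x f g sb2 s02 C Rt ((1/2 : ℝ) • (β + β')) ((θ0 + θ0') / 2)
      + (‖β - β'‖ ^ 2 / (2 * sb2) + (θ0 - θ0') ^ 2 / (2 * s02)) / 4
    ≤ (scoraLoss x f g sb2 s02 C Rt β θ0 + scoraLoss x f g sb2 s02 C Rt β' θ0') / 2 := by
  have hnorm : ‖(1/2 : ℝ) • (β + β')‖ ^ 2 / (2 * sb2) + (‖β - β'‖ ^ 2 / (2 * sb2)) / 4
      = (‖β‖ ^ 2 / (2 * sb2) + ‖β'‖ ^ 2 / (2 * sb2)) / 2 := by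
    have h1 : ‖(1/2 : ℝ) • (β + β')‖ = (1/2 : ℝ) * ‖β + β'‖ := by
      rw [norm_smul]
      norm_num
    have h2 := norm_add_sq_real β β'
    have h3 := norm_sub_sq_real β β'
    have key : ‖(1/2 : ℝ) • (β + β')‖ ^ 2 + ‖β - β'‖ ^ 2 / 4 = (‖β‖ ^ 2 + ‖β'‖ ^ 2) / 2 := by
      rw [h1, mul_pow, h2, h3]
      ring
    calc ‖(1/2 : ℝ) • (β + β')‖ ^ 2 / (2 * sb2) + (‖β - β'‖ ^ 2 / (2 * sb2)) / 4
        = (‖(1/2 : ℝ) • (β + β')‖ ^ 2 + ‖β - β'‖ ^ 2 / 4) / (2 * sb2) := by ring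
      _ = ((‖β‖ ^ 2 + ‖β'‖ ^ 2) / 2) / (2 * sb2) := by rw [key]
      _ = (‖β‖ ^ 2 / (2 * sb2) + ‖β'‖ ^ 2 / (2 * sb2)) / 2 := by ring
  have hθ : ((θ0 + θ0') / 2) ^ 2 / (2 * s02) + ((θ0 - θ0') ^ 2 / (2 * s02)) / 4
      = (θ0 ^ 2 / (2 * s02) + θ0' ^ 2 / (2 * s02)) / 2 := by
    field_simp
    ring
  have hC : ((C.map (fun q =>
        cgfm f ⟪x q.1 - x q.2.1, (1/2 : ℝ) • (β + β')⟫
          - q.2.2 * ⟪x q.1 - x q.2.1, (1/2 : ℝ) • (β + β')⟫)).sum)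
      ≤ ((C.map (fun q =>
        cgfm f ⟪x q.1 - x q.2.1, β⟫ - q.2.2 * ⟪x q.1 - x q.2.1, β⟫)).sum
        + (C.map (fun q =>
        cgfm f ⟪x q.1 - x q.2.1, β'⟫ - q.2.2 * ⟪x q.1 - x q.2.1, β'⟫)).sum) / 2 := by
    apply sum_map_le_half
    intro q _
    have hinner : ⟪x q.1 - x q.2.1, (1/2 : ℝ) • (β + β')⟫
        = (⟪x q.1 - x q.2.1, β⟫ + ⟪x q.1 - x q.2.1, β'⟫) / 2 := by
      rw [real_inner_smul_right, inner_add_right]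
      ring
    rw [hinner]
    have := cgfm_midpoint hf ⟪x q.1 - x q.2.1, β⟫ ⟪x q.1 - x q.2.1, β'⟫
    linarith
  have hRt : ((Rt.map (fun q =>
        cgfm g (⟪x q.1, (1/2 : ℝ) • (β + β')⟫ - (θ0 + θ0') / 2)
          - q.2 * (⟪x q.1, (1/2 : ℝ) • (β + β')⟫ - (θ0 + θ0') / 2))).sum)
      ≤ ((Rt.map (fun q =>
        cgfm g (⟪x q.1, β⟫ - θ0) - q.2 * (⟪x q.1, β⟫ - θ0))).sum
        + (Rt.map (fun q =>
        cgfm g (⟪x q.1, β'⟫ - θ0') - q.2 * (⟪x q.1, β'⟫ - θ0'))).sum) / 2 := by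
    apply sum_map_le_half
    intro q _
    have hinner : ⟪x q.1, (1/2 : ℝ) • (β + β')⟫ - (θ0 + θ0') / 2
        = ((⟪x q.1, β⟫ - θ0) + (⟪x q.1, β'⟫ - θ0')) / 2 := by
      rw [real_inner_smul_right, inner_add_right]
      ring
    rw [hinner]
    have := cgfm_midpoint hg (⟪x q.1, β⟫ - θ0) (⟪x q.1, β'⟫ - θ0')
    linarith
  unfold scoraLoss
  linarith

end ScoraAux

open ScoraAux in
/-- directional effect of a new rating in SCoRa. If `D'` is obtained from `D`
by adding one rating `(a, t)`, then
`Sign((θ_a*(D') − θ_0*(D')) − (θ_a*(D) − θ_0*(D))) = Sign(t − Φ_g'(θ_a*(D) − θ_0*(D)))`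
(where `θ_a* = x_aᵀ β*`). -/
theorem scora_directional_update_rating
    {Dd A : ℕ} (x : Fin A → EuclideanSpace ℝ (Fin Dd))
    (f g : Measure ℝ) [IsProbabilityMeasure f] [IsProbabilityMeasure g]
    (hf : HasExpMoments f) (hg : HasExpMoments g)
    (sb2 s02 : ℝ) (hsb : 0 < sb2) (hs0 : 0 < s02)
    (C : Multiset (Fin A × Fin A × ℝ)) (Rt : Multiset (Fin A × ℝ))
    (a : Fin A) (t : ℝ)
    (β β' : EuclideanSpace ℝ (Fin Dd)) (θ0 θ0' : ℝ)
    (hmin : ∀ (γ : EuclideanSpace ℝ (Fin Dd)) (s : ℝ),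
      scoraLoss x f g sb2 s02 C Rt β θ0 ≤ scoraLoss x f g sb2 s02 C Rt γ s)
    (hmin' : ∀ (γ : EuclideanSpace ℝ (Fin Dd)) (s : ℝ),
      scoraLoss x f g sb2 s02 C ((a, t) ::ₘ Rt) β' θ0'
        ≤ scoraLoss x f g sb2 s02 C ((a, t) ::ₘ Rt) γ s) :
    Real.sign ((⟪x a, β'⟫ - θ0') - (⟪x a, β⟫ - θ0))
      = Real.sign (t - deriv (cgfm g) (⟪x a, β⟫ - θ0)) := by
  set u : ℝ := ⟪x a, β⟫ - θ0 with hu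
  set u' : ℝ := ⟪x a, β'⟫ - θ0' with hu'
  -- the derivative of cgfm g at any point
  set dg : ℝ → ℝ := fun v => (∫ r, r * Real.exp (v * r) ∂g) / (∫ r, Real.exp (v * r) ∂g) with hdg
  have hderiv : ∀ v : ℝ, HasDerivAt (cgfm g) (dg v) v := fun v => hasDerivAt_cgfm hg v
  have hderiv_eq : deriv (cgfm g) u = dg u := (hderiv u).deriv
  rw [hderiv_eq]
  by_cases hvv : β' = β ∧ θ0' = θ0
  · -- minimizers agree: both sides are zero
    obtain ⟨hβ, hθ⟩ := hvv
    have hu'' : u' = u := by rw [hu, hu', hβ, hθ]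
    have huu : ⟪x a, β'⟫ - θ0' = u := by rw [hβ, hθ, hu]
    -- derivative of the loss in the θ0-direction
    have hFt : ∀ (m : Multiset (Fin A × ℝ)) (s : ℝ),
        HasDerivAt (fun y => scoraLoss x f g sb2 s02 C m β' y)
          (2 * s / (2 * s02)
            + (m.map (fun q => -(dg (⟪x q.1, β'⟫ - s)) + q.2)).sum) s := by
      intro m s
      have h1 : HasDerivAt (fun y : ℝ => ‖β'‖ ^ 2 / (2 * sb2)) 0 s := hasDerivAt_const _ _
      have h2 : HasDerivAt (fun y : ℝ => y ^ 2 / (2 * s02)) (2 * s / (2 * s02)) s := by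
        have h := (hasDerivAt_pow 2 s).div_const (2 * s02)
        refine h.congr_deriv ?_
        norm_num
      have h3 : HasDerivAt (fun y : ℝ => (C.map (fun q =>
          cgfm f ⟪x q.1 - x q.2.1, β'⟫ - q.2.2 * ⟪x q.1 - x q.2.1, β'⟫)).sum) 0 s :=
        hasDerivAt_const _ _
      have h4 : HasDerivAt (fun y : ℝ => (m.map (fun q =>
          cgfm g (⟪x q.1, β'⟫ - y) - q.2 * (⟪x q.1, β'⟫ - y))).sum)
          ((m.map (fun q => -(dg (⟪x q.1, β'⟫ - s)) + q.2)).sum) s := by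
        apply hasDerivAt_sum_map
        intro q _
        have hin : HasDerivAt (fun y : ℝ => ⟪x q.1, β'⟫ - y) (-1) s := by
          simpa using (hasDerivAt_id s).const_sub ⟪x q.1, β'⟫
        have hcomp : HasDerivAt (fun y : ℝ => cgfm g (⟪x q.1, β'⟫ - y))
            (dg (⟪x q.1, β'⟫ - s) * (-1)) s := (hderiv (⟪x q.1, β'⟫ - s)).comp s hin
        have hlin : HasDerivAt (fun y : ℝ => q.2 * (⟪x q.1, β'⟫ - y)) (q.2 * (-1)) s :=
          hin.const_mul q.2
        have hd2 := hcomp.sub hlin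
        refine hd2.congr_deriv ?_
        ring
      have hall := ((h1.add h2).add h3).add h4
      simp only [scoraLoss]
      refine hall.congr_deriv ?_
      ring
    have hminF : IsLocalMin (fun y => scoraLoss x f g sb2 s02 C Rt β' y) θ0' :=
      Filter.Eventually.of_forall (fun s => by
        show scoraLoss x f g sb2 s02 C Rt β' θ0' ≤ scoraLoss x f g sb2 s02 C Rt β' s
        rw [hβ, hθ]
        exact hmin β s)
    have hminG : IsLocalMin (fun y => scoraLoss x f g sb2 s02 C ((a, t) ::ₘ Rt) β' y) θ0' :=
      Filter.Eventually.of_forall (fun s => hmin' β' s)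
    have hF0 := hminF.hasDerivAt_eq_zero (hFt Rt θ0')
    have hG0 := hminG.hasDerivAt_eq_zero (hFt ((a, t) ::ₘ Rt) θ0')
    rw [Multiset.map_cons, Multiset.sum_cons] at hG0
    rw [huu] at hG0
    have ht : t - dg u = 0 := by linarith
    rw [hu'', ht, sub_self]
  · -- minimizers differ: strict decrease argument
    have hψ : (cgfm g u' - t * u') < cgfm g u - t * u := by
      -- abbreviations
      have hLv' : scoraLoss x f g sb2 s02 C Rt β θ0 ≤ scoraLoss x f g sb2 s02 C Rt β' θ0' :=
        hmin β' θ0'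
      have hmid := scoraLoss_midpoint x f g hf hg hsb hs0 C Rt β β' θ0 θ0'
      have hmw := hmin' ((1/2 : ℝ) • (β + β')) ((θ0 + θ0') / 2)
      rw [scoraLoss_cons, scoraLoss_cons] at hmw
      have hwinner : ⟪x a, (1/2 : ℝ) • (β + β')⟫ - (θ0 + θ0') / 2 = (u + u') / 2 := by
        rw [real_inner_smul_right, inner_add_right, hu, hu']
        ring
      rw [hwinner, ← hu'] at hmw
      have hψmid : cgfm g ((u + u') / 2) - t * ((u + u') / 2)
          ≤ ((cgfm g u - t * u) + (cgfm g u' - t * u')) / 2 := by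
        have := cgfm_midpoint hg u u'
        linarith
      -- positivity of the strictness gap
      have hδ : 0 < (‖β - β'‖ ^ 2 / (2 * sb2) + (θ0 - θ0') ^ 2 / (2 * s02)) / 4 := by
        rcases not_and_or.mp hvv with hβ | hθ
        · have h1 : 0 < ‖β - β'‖ := by
            rw [norm_pos_iff, sub_ne_zero]
            exact fun h => hβ h.symm
          have h2 : 0 < ‖β - β'‖ ^ 2 / (2 * sb2) := by positivity
          have h3 : 0 ≤ (θ0 - θ0') ^ 2 / (2 * s02) := by positivity
          linarith
        · have h1 : (θ0 - θ0') ≠ 0 := fun h => hθ (by linarith [sub_eq_zero.mp h])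
          have h2 : 0 < (θ0 - θ0') ^ 2 / (2 * s02) := by positivity
          have h3 : 0 ≤ ‖β - β'‖ ^ 2 / (2 * sb2) := by positivity
          linarith
      set W := scoraLoss x f g sb2 s02 C Rt ((1/2 : ℝ) • (β + β')) ((θ0 + θ0') / 2) with hW
      clear_value W u u'
      have s1 : scoraLoss x f g sb2 s02 C Rt β' θ0' + (cgfm g u' - t * u')
          ≤ W + (cgfm g u - t * u + (cgfm g u' - t * u')) / 2 := by linarith [hmw, hψmid]
      have s2 : W ≤ scoraLoss x f g sb2 s02 C Rt β' θ0'
          - (‖β - β'‖ ^ 2 / (2 * sb2) + (θ0 - θ0') ^ 2 / (2 * s02)) / 4 := by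
        linarith [hmid, hLv']
      linarith [s1, s2, hδ]
    -- tangent line inequality
    have htang := tangent_le (convexOn_cgfm hg) (hderiv u) u'
    have hkey : 0 < (t - dg u) * (u' - u) := by nlinarith [htang, hψ]
    rcases mul_pos_iff.mp hkey with ⟨h1, h2⟩ | ⟨h1, h2⟩
    · rw [Real.sign_of_pos h2, Real.sign_of_pos h1]
    · rw [Real.sign_of_neg h2, Real.sign_of_neg h1]

end
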